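/- Let α ∈ (0,1) and n ≥ 1. There is the uniform bound: for every continuously differentiable x:[0,π]→ℝ with x(0)=x(π)=0 whose derivative is α-Hölder continuous, the trigonometric polynomial (Π̂⁰_n x)(t) = ∑_{k=1}^{n} ((n−k)/n)·(∫₀^π x(s)·sin(ks) ds)·sin(kt) satisfies ‖Π̂⁰_n x‖_{C^{1+α}} ≤ 2π·‖x‖_{C^{1+α}}. -/

import Mathlib

open Real

/-- The `C^{1+α}` norm of a function on `[0,T]`:
`sup |x| + sup |x'| + sup_{s ≠ t} |x'(t) - x'(s)| / |t-s|^α`. -/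
noncomputable def C1alphaNorm (T α : ℝ) (x : ℝ → ℝ) : ℝ :=
  (⨆ t : Set.Icc (0:ℝ) T, |x t|) + (⨆ t : Set.Icc (0:ℝ) T, |deriv x t|) +
    ⨆ p : Set.Icc (0:ℝ) T × Set.Icc (0:ℝ) T,
      if (p.1 : ℝ) = (p.2 : ℝ) then 0
      else |deriv x p.1 - deriv x p.2| / |(p.1 : ℝ) - (p.2 : ℝ)| ^ α

namespace C1aAux
open Real Finset intervalIntegral



lemma dsum_cos (n : ℕ) (u : ℝ) :
    (∑ j ∈ range n, ∑ k ∈ range n, Real.cos (((j:ℝ) - k) * u))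
      = n + 2 * ∑ k ∈ Finset.Icc 1 n, ((n:ℝ) - k) * Real.cos (k * u) := by
  induction n with
  | zero => simp
  | succ n ih =>
    have hicc : ∀ m : ℕ, Finset.Icc 1 m = Finset.Ico 1 (m+1) := by
      intro m; rw [Finset.Ico_add_one_right_eq_Icc]
    have hrow : (∑ j ∈ range n, Real.cos (((j:ℝ) - n) * u))
        = ∑ k ∈ Finset.Icc 1 n, Real.cos (k * u) := by
      rw [hicc, Finset.sum_Ico_eq_sum_range]
      simp only [Nat.add_sub_cancel]
      rw [← Finset.sum_range_reflect]
      refine Finset.sum_congr rfl fun j hj => ?_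
      rw [Finset.mem_range] at hj
      have h2 : ((n - 1 - j : ℕ) : ℝ) = (n : ℝ) - 1 - j := by
        have : n - 1 - j = n - (1 + j) := by omega
        rw [this, Nat.cast_sub (by omega)]; push_cast; ring
      rw [h2, ← Real.cos_neg]
      push_cast
      ring_nf
    have expand : (∑ j ∈ range (n+1), ∑ k ∈ range (n+1), Real.cos (((j:ℝ) - k) * u))
        = (∑ j ∈ range n, ∑ k ∈ range n, Real.cos (((j:ℝ) - k) * u))
          + 2 * (∑ j ∈ range n, Real.cos (((j:ℝ) - n) * u)) + 1 := by
      rw [Finset.sum_range_succ]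
      rw [Finset.sum_congr rfl (fun j (_ : j ∈ range n) => Finset.sum_range_succ
        (fun k => Real.cos (((j:ℝ) - k) * u)) n), Finset.sum_add_distrib,
        Finset.sum_range_succ]
      have : (∑ k ∈ range n, Real.cos (((n:ℝ) - k) * u))
          = ∑ j ∈ range n, Real.cos (((j:ℝ) - n) * u) := by
        refine Finset.sum_congr rfl fun j _ => ?_
        rw [← Real.cos_neg (((j:ℝ) - n) * u)]
        ring_nf
      rw [this]
      simp only [sub_self, zero_mul, Real.cos_zero]
      ring
    have rhs_expand : (∑ k ∈ Finset.Icc 1 (n+1), (((n:ℝ)+1) - k) * Real.cos (k * u))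
        = (∑ k ∈ Finset.Icc 1 n, ((n:ℝ) - k) * Real.cos (k * u))
          + ∑ k ∈ Finset.Icc 1 n, Real.cos (k * u) := by
      rw [show Finset.Icc 1 (n+1) = insert (n+1) (Finset.Icc 1 n) from by
        rw [hicc n, Finset.Ico_insert_right (by omega), hicc]]
      rw [Finset.sum_insert (by simp), ← Finset.sum_add_distrib]
      push_cast
      rw [show ((n:ℝ) + 1 - ((n:ℝ)+1)) * Real.cos (((n:ℝ)+1) * u) = 0 from by ring]
      rw [zero_add]
      exact Finset.sum_congr rfl fun k _ => by ring
    rw [expand, hrow, ih]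
    push_cast
    rw [rhs_expand]
    ring




noncomputable def Fej (n : ℕ) (u : ℝ) : ℝ :=
  1 + 2 * ∑ k ∈ Finset.Icc 1 n, (((n:ℝ) - k) / n) * Real.cos (k * u)

lemma Fej_key (n : ℕ) (hn : 1 ≤ n) (u : ℝ) :
    (n : ℝ) * Fej n u
      = (∑ j ∈ range n, Real.cos (j * u))^2 + (∑ j ∈ range n, Real.sin (j * u))^2 := by
  have hn0 : (n:ℝ) ≠ 0 := by
    have : (0:ℝ) < n := by exact_mod_cast Nat.pos_of_ne_zero (by omega)
    linarith
  have e1 : (∑ j ∈ range n, Real.cos (j * u))^2 + (∑ j ∈ range n, Real.sin (j * u))^2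
      = ∑ j ∈ range n, ∑ k ∈ range n, Real.cos (((j:ℝ) - k) * u) := by
    rw [sq, sq, Finset.sum_mul_sum, Finset.sum_mul_sum, ← Finset.sum_add_distrib]
    refine Finset.sum_congr rfl fun j _ => ?_
    rw [← Finset.sum_add_distrib]
    refine Finset.sum_congr rfl fun k _ => ?_
    rw [show ((j:ℝ) - k) * u = j*u - k*u by ring, Real.cos_sub]
  rw [e1, dsum_cos]
  unfold Fej
  rw [mul_add, mul_one, Finset.mul_sum, Finset.mul_sum]
  congr 1
  rw [Finset.mul_sum]
  refine Finset.sum_congr rfl fun k _ => ?_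
  field_simp

lemma Fej_nonneg {n : ℕ} (hn : 1 ≤ n) (u : ℝ) : 0 ≤ Fej n u := by
  have hn0 : (0:ℝ) < n := by exact_mod_cast Nat.pos_of_ne_zero (by omega)
  have := Fej_key n hn u
  nlinarith [sq_nonneg (∑ j ∈ range n, Real.cos (j * u)),
    sq_nonneg (∑ j ∈ range n, Real.sin (j * u))]

lemma Fej_cont (n : ℕ) : Continuous (Fej n) := by
  unfold Fej; fun_prop

lemma Fej_periodic (n : ℕ) : Function.Periodic (Fej n) (2 * π) := by
  intro u
  unfold Fej
  congr 2
  refine Finset.sum_congr rfl fun k _ => ?_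
  congr 1
  rw [show (k:ℝ) * (u + 2 * π) = k * u + k * (2*π) by ring]
  exact Real.cos_add_nat_mul_two_pi _ k

lemma integral_Fej (n : ℕ) : ∫ u in (-π)..π, Fej n u = 2 * π := by
  unfold Fej
  have hi : ∀ k ∈ Finset.Icc 1 n, IntervalIntegrable
      (fun u => (((n:ℝ) - k) / n) * Real.cos (k * u)) MeasureTheory.volume (-π) π :=
    fun k _ => (Continuous.intervalIntegrable (by fun_prop) _ _)
  rw [intervalIntegral.integral_add (Continuous.intervalIntegrable (by fun_prop) _ _)
    (Continuous.intervalIntegrable (by fun_prop) _ _)]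
  have h2 : ∫ u in (-π)..π, (2 * ∑ k ∈ Finset.Icc 1 n, (((n:ℝ) - k) / n) * Real.cos (k * u)) = 0 := by
    rw [intervalIntegral.integral_const_mul, intervalIntegral.integral_finset_sum hi]
    have : ∀ k ∈ Finset.Icc 1 n,
        (∫ u in (-π)..π, (((n:ℝ) - k) / n) * Real.cos (k * u)) = 0 := by
      intro k hk
      have hk0 : (k:ℝ) ≠ 0 := by
        have : 1 ≤ k := (Finset.mem_Icc.mp hk).1
        exact_mod_cast (Nat.pos_of_ne_zero (by omega)).ne'
      rw [intervalIntegral.integral_const_mul,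
        intervalIntegral.integral_comp_mul_left (fun x => Real.cos x) hk0,
        integral_cos]
      rw [show (k:ℝ) * π = (k:ℕ) * π by norm_num, Real.sin_nat_mul_pi,
        show (k:ℝ) * (-π) = -((k:ℕ) * π) by push_cast; ring, Real.sin_neg,
        Real.sin_nat_mul_pi]
      simp
    rw [Finset.sum_congr rfl this]
    simp
  rw [h2]
  simp
  ring


def latt : Set ℝ := Set.range (fun k : ℤ => 2 * π * k)

lemma latt_nonempty : latt.Nonempty := ⟨0, ⟨0, by simp⟩⟩

noncomputable def fold (v : ℝ) : ℝ := Metric.infDist v latt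

lemma fold_nonneg (v : ℝ) : 0 ≤ fold v := Metric.infDist_nonneg

lemma fold_le_pi (v : ℝ) : fold v ≤ π := by
  have hmem : (2 * π * (round (v / (2 * π))) : ℝ) ∈ latt := ⟨_, rfl⟩
  refine le_trans (Metric.infDist_le_dist_of_mem hmem) ?_
  rw [Real.dist_eq]
  have h1 := abs_sub_round (v / (2 * π))
  have h2 : (0:ℝ) < 2 * π := by positivity
  rw [show v - 2 * π * round (v / (2 * π)) = (2*π) * (v / (2*π) - round (v / (2*π))) from by
    field_simp, abs_mul, abs_of_pos h2]
  calc (2*π) * |v / (2*π) - round (v / (2*π))| ≤ (2*π) * (1/2) := by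
        exact mul_le_mul_of_nonneg_left h1 h2.le
    _ = π := by ring

lemma fold_eq_self {v : ℝ} (h0 : 0 ≤ v) (hpi : v ≤ π) : fold v = v := by
  refine le_antisymm ?_ ?_
  · have hmem : (0:ℝ) ∈ latt := ⟨0, by simp⟩
    unfold fold
    refine le_trans (Metric.infDist_le_dist_of_mem hmem) ?_
    rw [Real.dist_eq, sub_zero, abs_of_nonneg h0]
  · haveI : Nonempty latt := ⟨⟨0, 0, by simp⟩⟩
    rw [fold, Metric.infDist_eq_iInf]
    refine le_ciInf fun y => ?_
    obtain ⟨k, hk⟩ := y.2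
    rw [Real.dist_eq, ← hk]
    beta_reduce
    rcases le_or_gt (k:ℝ) 0 with h | h
    · have : 2 * π * k ≤ 0 := by
        have := pi_pos
        nlinarith
      rw [abs_of_nonneg (by linarith)]
      linarith
    · have hk1 : (1:ℝ) ≤ k := by exact_mod_cast h
      have hp : 2 * π * k ≥ 2 * π := by nlinarith [pi_pos]
      rw [abs_of_nonpos (by nlinarith [pi_pos])]
      nlinarith [pi_pos]

lemma fold_lip (a b : ℝ) : |fold a - fold b| ≤ |a - b| := by
  have h1 := Metric.infDist_le_infDist_add_dist (x := a) (y := b) (s := latt)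
  have h2 := Metric.infDist_le_infDist_add_dist (x := b) (y := a) (s := latt)
  rw [Real.dist_eq] at h1 h2
  rw [abs_sub_le_iff]
  have h3 : |b - a| = |a - b| := abs_sub_comm b a
  constructor
  · unfold fold; linarith
  · unfold fold; linarith

lemma latt_neg : Neg.neg '' latt = latt := by
  ext y
  constructor
  · rintro ⟨z, ⟨k, rfl⟩, rfl⟩
    exact ⟨-k, by push_cast; ring⟩
  · rintro ⟨k, rfl⟩
    exact ⟨2 * π * (-k : ℤ), ⟨-k, rfl⟩, by push_cast; ring⟩

lemma fold_even (v : ℝ) : fold (-v) = fold v := by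
  have := Metric.infDist_image (x := v) (t := latt) (Φ := (Neg.neg : ℝ → ℝ))
    isometry_neg
  rw [fold, fold, ← this, latt_neg]

lemma latt_translate : (fun x : ℝ => x + 2 * π) '' latt = latt := by
  ext y
  constructor
  · rintro ⟨z, ⟨k, rfl⟩, rfl⟩
    exact ⟨k + 1, by push_cast; ring⟩
  · rintro ⟨k, rfl⟩
    exact ⟨2 * π * ((k : ℤ) - 1), ⟨k - 1, by push_cast; ring⟩, by push_cast; ring⟩

lemma fold_periodic : Function.Periodic fold (2 * π) := by
  intro v
  have := Metric.infDist_image (x := v) (t := latt)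
    (Φ := (fun x : ℝ => x + 2 * π)) (Isometry.of_dist_eq fun a b => by
      simp [Real.dist_eq])
  rw [fold, fold, ← this, latt_translate]

lemma fold_cont : Continuous fold := Metric.continuous_infDist_pt latt

section main
variable {n : ℕ} (hn : 1 ≤ n) {x : ℝ → ℝ}

-- kernel identities
lemma ker_sin (n : ℕ) (t s : ℝ) :
    ∑ k ∈ Finset.Icc 1 n, (((n:ℝ) - k) / n) * Real.sin (k * s) * Real.sin (k * t)
      = (Fej n (t - s) - Fej n (t + s)) / 4 := by
  have hpt : ∀ k ∈ Finset.Icc 1 n, (((n:ℝ) - k) / n) * Real.sin (k * s) * Real.sin (k * t)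
      = ((((n:ℝ) - k) / n) * Real.cos (k * (t - s)) - (((n:ℝ) - k) / n) * Real.cos (k * (t + s))) / 2 := by
    intro k _
    rw [show (k:ℝ) * (t - s) = k*t - k*s by ring, show (k:ℝ) * (t + s) = k*t + k*s by ring,
      Real.cos_sub, Real.cos_add]
    ring
  rw [Finset.sum_congr rfl hpt, ← Finset.sum_div, Finset.sum_sub_distrib]
  unfold Fej
  ring

lemma ker_cos (n : ℕ) (t s : ℝ) :
    ∑ k ∈ Finset.Icc 1 n, (((n:ℝ) - k) / n) * Real.cos (k * s) * Real.cos (k * t)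
      = (Fej n (t - s) + Fej n (t + s) - 2) / 4 := by
  have hpt : ∀ k ∈ Finset.Icc 1 n, (((n:ℝ) - k) / n) * Real.cos (k * s) * Real.cos (k * t)
      = ((((n:ℝ) - k) / n) * Real.cos (k * (t - s)) + (((n:ℝ) - k) / n) * Real.cos (k * (t + s))) / 2 := by
    intro k _
    rw [show (k:ℝ) * (t - s) = k*t - k*s by ring, show (k:ℝ) * (t + s) = k*t + k*s by ring,
      Real.cos_sub, Real.cos_add]
    ring
  rw [Finset.sum_congr rfl hpt, ← Finset.sum_div, Finset.sum_add_distrib]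
  unfold Fej
  ring

-- total mass of the shifted kernels
lemma Fej_shift_mass (n : ℕ) (t : ℝ) :
    (∫ s in (0:ℝ)..π, Fej n (t - s)) + (∫ s in (0:ℝ)..π, Fej n (t + s)) = 2 * π := by
  have h1 : (∫ s in (0:ℝ)..π, Fej n (t - s)) = ∫ u in (t - π)..t, Fej n u := by
    rw [intervalIntegral.integral_comp_sub_left (Fej n) t]
    norm_num
  have h2 : (∫ s in (0:ℝ)..π, Fej n (t + s)) = ∫ u in t..(t + π), Fej n u := by
    rw [intervalIntegral.integral_comp_add_left (Fej n) t]
    norm_num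
  rw [h1, h2]
  have hint : ∀ a b : ℝ, IntervalIntegrable (Fej n) MeasureTheory.volume a b :=
    fun a b => (Fej_cont n).intervalIntegrable a b
  rw [intervalIntegral.integral_add_adjacent_intervals (hint _ _) (hint _ _)]
  have := (Fej_periodic n).intervalIntegral_add_eq (t - π) (-π)
  rw [show t - π + 2 * π = t + π by ring, show -π + 2*π = π by ring] at this
  rw [this, integral_Fej]



variable {n : ℕ} {x : ℝ → ℝ}

-- derivative of the projection
lemma proj_hasDeriv (n : ℕ) (c : ℕ → ℝ) (t : ℝ) :
    HasDerivAt (fun t => ∑ k ∈ Finset.Icc 1 n, c k * Real.sin (k * t))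
      (∑ k ∈ Finset.Icc 1 n, c k * ((k:ℝ) * Real.cos (k * t))) t := by
  refine HasDerivAt.fun_sum fun k _ => ?_
  have h1 : HasDerivAt (fun t : ℝ => (k:ℝ) * t) k t := by
    simpa using (hasDerivAt_id t).const_mul (k:ℝ)
  have h2 := (Real.hasDerivAt_sin ((k:ℝ)*t)).comp t h1
  simpa [mul_comm, mul_assoc, mul_left_comm] using h2.const_mul (c k)

-- integration by parts
lemma ibp (hx : ContDiff ℝ 1 x) (hx0 : x 0 = 0) (hxpi : x π = 0)
    {k : ℕ} (hk : 1 ≤ k) :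
    (k:ℝ) * ∫ s in (0:ℝ)..π, x s * Real.sin (k * s)
      = ∫ s in (0:ℝ)..π, deriv x s * Real.cos (k * s) := by
  have hk0 : (k:ℝ) ≠ 0 := by exact_mod_cast (Nat.pos_of_ne_zero (by omega)).ne'
  have hu : ∀ s ∈ Set.uIcc (0:ℝ) π, HasDerivAt x (deriv x s) s := fun s _ =>
    ((hx.differentiable one_ne_zero) s).hasDerivAt
  have hv : ∀ s ∈ Set.uIcc (0:ℝ) π, HasDerivAt (fun s => -Real.cos ((k:ℝ) * s) / k)
      (Real.sin ((k:ℝ) * s)) s := by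
    intro s _
    have h1 : HasDerivAt (fun s : ℝ => (k:ℝ) * s) k s := by
      simpa using (hasDerivAt_id s).const_mul (k:ℝ)
    have h2 := (Real.hasDerivAt_cos ((k:ℝ)*s)).comp s h1
    have h3 := (h2.const_mul (-1/(k:ℝ)))
    convert h3 using 1
    case e'_8 => ext u; simp only [Function.comp]; field_simp
    case e'_9 => field_simp
    all_goals rfl
  have hcd : Continuous (deriv x) := hx.continuous_deriv le_rfl
  have := intervalIntegral.integral_mul_deriv_eq_deriv_mul hu hv
    ((hcd.intervalIntegrable _ _))
    (((Real.continuous_sin.comp (continuous_const.mul continuous_id)).intervalIntegrable _ _))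
  rw [hx0, hxpi] at this
  simp only [zero_mul, sub_zero, zero_sub, neg_neg] at this
  rw [this, ← intervalIntegral.integral_neg, ← intervalIntegral.integral_const_mul]
  refine intervalIntegral.integral_congr fun s _ => ?_
  field_simp

variable (hx : ContDiff ℝ 1 x)

-- the projection as an integral against the sine kernel
lemma proj_eq_integral (hx : ContDiff ℝ 1 x) (n : ℕ) (t : ℝ) :
    ∑ k ∈ Finset.Icc 1 n, (((n : ℝ) - k) / n) * (∫ s in (0:ℝ)..π, x s * Real.sin (k * s)) * Real.sin (k * t)
      = ∫ s in (0:ℝ)..π, x s * ((Fej n (t - s) - Fej n (t + s)) / 4) := by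
  have hxc : Continuous x := hx.continuous
  have step1 : ∀ k ∈ Finset.Icc 1 n,
      (((n : ℝ) - k) / n) * (∫ s in (0:ℝ)..π, x s * Real.sin (k * s)) * Real.sin (k * t)
        = ∫ s in (0:ℝ)..π, x s * ((((n : ℝ) - k) / n) * Real.sin (k * s) * Real.sin (k * t)) := by
    intro k _
    rw [show (((n : ℝ) - k) / n) * (∫ s in (0:ℝ)..π, x s * Real.sin (k * s)) * Real.sin (k * t)
        = (∫ s in (0:ℝ)..π, x s * Real.sin (k * s)) * ((((n : ℝ) - k) / n) * Real.sin (k * t)) from by ring,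
      ← intervalIntegral.integral_mul_const]
    exact intervalIntegral.integral_congr fun s _ => by ring
  have swap := intervalIntegral.integral_finset_sum (μ := MeasureTheory.volume) (a := (0:ℝ)) (b := π)
    (f := fun (k : ℕ) (s : ℝ) => x s * ((((n : ℝ) - k) / n) * Real.sin (k * s) * Real.sin (k * t)))
    (fun k (_ : k ∈ Finset.Icc 1 n) => (by fun_prop : Continuous fun s => x s * ((((n : ℝ) - k) / n) * Real.sin (k * s) * Real.sin (k * t))).intervalIntegrable _ _)
  rw [Finset.sum_congr rfl step1, ← swap]
  refine intervalIntegral.integral_congr fun s _ => ?_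
  rw [← Finset.mul_sum, ker_sin]

-- derivative of projection as integral against the cosine kernel
lemma proj_deriv_eq_integral (hx : ContDiff ℝ 1 x) (hx0 : x 0 = 0) (hxpi : x π = 0) (n : ℕ) (t : ℝ) :
    deriv (fun t => ∑ k ∈ Finset.Icc 1 n,
        (((n : ℝ) - k) / n) * (∫ s in (0:ℝ)..π, x s * Real.sin (k * s)) * Real.sin (k * t)) t
      = ∫ s in (0:ℝ)..π, deriv x s * ((Fej n (t - s) + Fej n (t + s) - 2) / 4) := by
  have hcd : Continuous (deriv x) := hx.continuous_deriv le_rfl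
  rw [(proj_hasDeriv n (fun k => (((n : ℝ) - k) / n) * (∫ s in (0:ℝ)..π, x s * Real.sin (k * s))) t).deriv]
  have step1 : ∀ k ∈ Finset.Icc 1 n,
      (((n : ℝ) - k) / n) * (∫ s in (0:ℝ)..π, x s * Real.sin (k * s)) * ((k:ℝ) * Real.cos (k * t))
        = ∫ s in (0:ℝ)..π, deriv x s * ((((n : ℝ) - k) / n) * Real.cos (k * s) * Real.cos (k * t)) := by
    intro k hk
    have h1 := ibp hx hx0 hxpi (Finset.mem_Icc.mp hk).1
    calc (((n : ℝ) - k) / n) * (∫ s in (0:ℝ)..π, x s * Real.sin (k * s)) * ((k:ℝ) * Real.cos (k * t))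
        = ((k:ℝ) * ∫ s in (0:ℝ)..π, x s * Real.sin (k * s)) * ((((n : ℝ) - k) / n) * Real.cos (k * t)) := by ring
      _ = (∫ s in (0:ℝ)..π, deriv x s * Real.cos (k * s)) * ((((n : ℝ) - k) / n) * Real.cos (k * t)) := by rw [h1]
      _ = ∫ s in (0:ℝ)..π, deriv x s * ((((n : ℝ) - k) / n) * Real.cos (k * s) * Real.cos (k * t)) := by
          rw [← intervalIntegral.integral_mul_const]
          exact intervalIntegral.integral_congr fun s _ => by ring
  have swap := intervalIntegral.integral_finset_sum (μ := MeasureTheory.volume) (a := (0:ℝ)) (b := π)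
    (f := fun (k : ℕ) (s : ℝ) => deriv x s * ((((n : ℝ) - k) / n) * Real.cos (k * s) * Real.cos (k * t)))
    (fun k (_ : k ∈ Finset.Icc 1 n) => (by fun_prop : Continuous fun s => deriv x s * ((((n : ℝ) - k) / n) * Real.cos (k * s) * Real.cos (k * t))).intervalIntegrable _ _)
  rw [Finset.sum_congr rfl step1, ← swap]
  refine intervalIntegral.integral_congr fun s _ => ?_
  rw [← Finset.mul_sum, ker_cos]


end main

-- generic bound: |∫₀^π f s * ((Fej (t-s) ± Fej (t+s) + c)/4)| ≤ M * (2π + |c|·π)/4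
lemma bound_sup {n : ℕ} (hn : 1 ≤ n) {f : ℝ → ℝ} (hf : Continuous f) {M : ℝ}
    (hM : ∀ s ∈ Set.Icc (0:ℝ) π, |f s| ≤ M) (t : ℝ) (K : ℝ → ℝ → ℝ)
    (hK : Continuous (fun s => K t s))
    (hKb : ∀ s, |K t s| ≤ (Fej n (t - s) + Fej n (t + s) + 2) / 4) :
    |∫ s in (0:ℝ)..π, f s * K t s| ≤ M * π := by
  have c1 : Continuous fun s : ℝ => Fej n (t - s) :=
    (Fej_cont n).comp (continuous_const.sub continuous_id)
  have c2 : Continuous fun s : ℝ => Fej n (t + s) :=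
    (Fej_cont n).comp (continuous_const.add continuous_id)
  have i1 : IntervalIntegrable (fun s : ℝ => Fej n (t - s)) MeasureTheory.volume 0 π :=
    c1.intervalIntegrable _ _
  have i2 : IntervalIntegrable (fun s : ℝ => Fej n (t + s)) MeasureTheory.volume 0 π :=
    c2.intervalIntegrable _ _
  have i12 : IntervalIntegrable (fun s : ℝ => Fej n (t - s) + Fej n (t + s)) MeasureTheory.volume 0 π :=
    (c1.add c2).intervalIntegrable _ _
  have hM0 : 0 ≤ M := le_trans (abs_nonneg _) (hM 0 ⟨le_refl 0, pi_pos.le⟩)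
  have h1 : |∫ s in (0:ℝ)..π, f s * K t s| ≤ ∫ s in (0:ℝ)..π, |f s * K t s| :=
    intervalIntegral.abs_integral_le_integral_abs pi_pos.le
  have h2 : (∫ s in (0:ℝ)..π, |f s * K t s|)
      ≤ ∫ s in (0:ℝ)..π, M * ((Fej n (t - s) + Fej n (t + s) + 2) / 4) := by
    refine intervalIntegral.integral_mono_on pi_pos.le
      ((hf.mul hK).abs.intervalIntegrable _ _)
      ((continuous_const.mul (((c1.add c2).add continuous_const).div_const 4)).intervalIntegrable _ _)
      fun s hs => ?_
    rw [abs_mul]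
    exact mul_le_mul (hM s hs) (hKb s) (abs_nonneg _) hM0
  have h3 : (∫ s in (0:ℝ)..π, M * ((Fej n (t - s) + Fej n (t + s) + 2) / 4)) = M * π := by
    rw [intervalIntegral.integral_const_mul]
    have : (∫ s in (0:ℝ)..π, (Fej n (t - s) + Fej n (t + s) + 2) / 4)
        = ((∫ s in (0:ℝ)..π, Fej n (t - s)) + (∫ s in (0:ℝ)..π, Fej n (t + s))
            + (∫ s in (0:ℝ)..π, (2:ℝ))) / 4 := by
      rw [← intervalIntegral.integral_add i1 i2,
        ← intervalIntegral.integral_add i12 (continuous_const.intervalIntegrable _ _),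
        ← intervalIntegral.integral_div]
    rw [this, Fej_shift_mass, intervalIntegral.integral_const, sub_zero, smul_eq_mul]
    ring
  calc |∫ s in (0:ℝ)..π, f s * K t s| ≤ _ := h1
    _ ≤ _ := h2
    _ = M * π := h3


section r

variable {n : ℕ} {x e : ℝ → ℝ}

/-- representation of the smoothed-kernel integral via the periodic even extension `e` -/
lemma repr_ext (hx' : Continuous (deriv x)) (hec : Continuous e)
    (hee : ∀ s ∈ Set.Icc (0:ℝ) π, e s = deriv x s)
    (hev : ∀ v : ℝ, e (-v) = e v) (hep : Function.Periodic e (2 * π)) (n : ℕ) (t : ℝ) :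
    (∫ s in (0:ℝ)..π, deriv x s * (Fej n (t - s) + Fej n (t + s)))
      = ∫ u in (-π)..π, e (t - u) * Fej n u := by
  set f : ℝ → ℝ := fun u => e (t - u) * Fej n u with hf
  have hfc : Continuous f := (hec.comp (continuous_const.sub continuous_id)).mul (Fej_cont n)
  have c1 : Continuous fun s : ℝ => Fej n (t - s) :=
    (Fej_cont n).comp (continuous_const.sub continuous_id)
  have c2 : Continuous fun s : ℝ => Fej n (t + s) :=
    (Fej_cont n).comp (continuous_const.add continuous_id)
  have heq : Set.EqOn (fun s => deriv x s * (Fej n (t - s) + Fej n (t + s)))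
      (fun s => e s * Fej n (t - s) + e s * Fej n (t + s)) (Set.uIcc (0:ℝ) π) := by
    intro s hs
    rw [Set.uIcc_of_le pi_pos.le] at hs
    simp only [hee s hs]
    ring
  rw [intervalIntegral.integral_congr heq,
    intervalIntegral.integral_add
      (Continuous.intervalIntegrable (u := fun s => e s * Fej n (t - s)) (hec.mul c1) _ _)
      (Continuous.intervalIntegrable (u := fun s => e s * Fej n (t + s)) (hec.mul c2) _ _)]
  have h1 : (∫ s in (0:ℝ)..π, e s * Fej n (t - s)) = ∫ u in (t-π)..t, f u := by
    have hcs := intervalIntegral.integral_comp_sub_left (a := (0:ℝ)) (b := π) f t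
    rw [sub_zero] at hcs
    rw [← hcs]
    refine intervalIntegral.integral_congr fun s _ => ?_
    simp only [hf, sub_sub_cancel]
  have h2 : (∫ s in (0:ℝ)..π, e s * Fej n (t + s)) = ∫ u in t..(t+π), f u := by
    set g : ℝ → ℝ := fun u => e (u - t) * Fej n u with hg
    have hca := intervalIntegral.integral_comp_add_left (a := (0:ℝ)) (b := π) g t
    rw [add_zero] at hca
    have e2 : (∫ u in t..(t+π), f u) = ∫ u in t..(t+π), g u := by
      refine intervalIntegral.integral_congr fun u _ => ?_
      simp only [hg, hf]
      rw [show u - t = -(t - u) by ring, hev]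
    rw [e2, ← hca]
    refine (intervalIntegral.integral_congr fun s _ => ?_).symm
    simp only [hg, add_sub_cancel_left]
  rw [h1, h2, intervalIntegral.integral_add_adjacent_intervals
    (hfc.intervalIntegrable _ _) (hfc.intervalIntegrable _ _)]
  have hfp : Function.Periodic f (2 * π) := by
    intro u
    simp only [hf]
    rw [show t - (u + 2*π) = t - u - 2*π by ring, hep.sub_eq, Fej_periodic n u]
  have := hfp.intervalIntegral_add_eq (t - π) (-π)
  rw [show t - π + 2 * π = t + π by ring, show -π + 2*π = π by ring] at this
  rw [this]

/-- Hölder-type bound for differences -/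
lemma holder_diff {n : ℕ} (hn : 1 ≤ n) (hec : Continuous e) {D : ℝ} (t τ : ℝ)
    (hD : ∀ u : ℝ, |e (t - u) - e (τ - u)| ≤ D) :
    |(∫ u in (-π)..π, e (t - u) * Fej n u) - ∫ u in (-π)..π, e (τ - u) * Fej n u|
      ≤ D * (2 * π) := by
  have hD0 : 0 ≤ D := le_trans (abs_nonneg _) (hD 0)
  have c1 : Continuous fun u : ℝ => e (t - u) * Fej n u :=
    (hec.comp (continuous_const.sub continuous_id)).mul (Fej_cont n)
  have c2 : Continuous fun u : ℝ => e (τ - u) * Fej n u :=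
    (hec.comp (continuous_const.sub continuous_id)).mul (Fej_cont n)
  rw [← intervalIntegral.integral_sub (c1.intervalIntegrable _ _) (c2.intervalIntegrable _ _)]
  have hpi : (-π : ℝ) ≤ π := by linarith [pi_pos]
  refine le_trans (intervalIntegral.abs_integral_le_integral_abs hpi) ?_
  have h2 : (∫ u in (-π)..π, |e (t - u) * Fej n u - e (τ - u) * Fej n u|)
      ≤ ∫ u in (-π)..π, D * Fej n u := by
    refine intervalIntegral.integral_mono_on hpi ((c1.sub c2).abs.intervalIntegrable _ _)
      ((continuous_const.mul (Fej_cont n)).intervalIntegrable _ _) fun u _ => ?_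
    rw [show e (t - u) * Fej n u - e (τ - u) * Fej n u
        = (e (t - u) - e (τ - u)) * Fej n u by ring, abs_mul,
      abs_of_nonneg (Fej_nonneg hn u)]
    exact mul_le_mul_of_nonneg_right (hD u) (Fej_nonneg hn u)
  refine le_trans h2 ?_
  rw [intervalIntegral.integral_const_mul, integral_Fej]


end r

end C1aAux
-- appended to final.lean (inside nothing; C1aAux opened)
open C1aAux Real Finset intervalIntegral in
/-- The smoothed projections `Π̂⁰_n` onto the first `n` sine modes are
uniformly bounded on `C^{1+α}_0([0,π])` with norm at most `2π`. -/
theorem stmt2 (α : ℝ) (hα0 : 0 < α) (hα1 : α < 1) (n : ℕ) (hn : 1 ≤ n)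
    (x : ℝ → ℝ) (hx : ContDiff ℝ 1 x) (hx0 : x 0 = 0) (hxpi : x π = 0)
    (hH : ∃ K : NNReal, HolderOnWith K ⟨α, hα0.le⟩ (deriv x) (Set.Icc 0 π)) :
    C1alphaNorm π α
        (fun t => ∑ k ∈ Finset.Icc 1 n,
          (((n : ℝ) - k) / n) * (∫ s in (0:ℝ)..π, x s * Real.sin (k * s)) * Real.sin (k * t))
      ≤ 2 * π * C1alphaNorm π α x := by
  obtain ⟨K, hK⟩ := hH
  haveI : Nonempty (Set.Icc (0:ℝ) π) := ⟨⟨0, le_refl 0, pi_pos.le⟩⟩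
  unfold C1alphaNorm
  set g : ℝ → ℝ := fun t => ∑ k ∈ Finset.Icc 1 n,
      (((n : ℝ) - k) / n) * (∫ s in (0:ℝ)..π, x s * Real.sin (k * s)) * Real.sin (k * t) with hg
  have hxc : Continuous x := hx.continuous
  have hx'c : Continuous (deriv x) := hx.continuous_deriv le_rfl
  set S1 : ℝ := ⨆ t : Set.Icc (0:ℝ) π, |x t| with hS1def
  set S2 : ℝ := ⨆ t : Set.Icc (0:ℝ) π, |deriv x t| with hS2def
  set S3 : ℝ := ⨆ p : Set.Icc (0:ℝ) π × Set.Icc (0:ℝ) π,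
      if (p.1 : ℝ) = (p.2 : ℝ) then 0
      else |deriv x p.1 - deriv x p.2| / |(p.1 : ℝ) - (p.2 : ℝ)| ^ α with hS3def
  -- boundedness of the three families
  obtain ⟨C1, hC1⟩ := isCompact_Icc.exists_bound_of_continuousOn (f := x) hxc.continuousOn
  have hB1 : BddAbove (Set.range fun t : Set.Icc (0:ℝ) π => |x t|) :=
    ⟨C1, by rintro _ ⟨t, rfl⟩; simpa [Real.norm_eq_abs] using hC1 t t.2⟩
  obtain ⟨C2, hC2⟩ := isCompact_Icc.exists_bound_of_continuousOn (f := deriv x) hx'c.continuousOn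
  have hB2 : BddAbove (Set.range fun t : Set.Icc (0:ℝ) π => |deriv x t|) :=
    ⟨C2, by rintro _ ⟨t, rfl⟩; simpa [Real.norm_eq_abs] using hC2 t t.2⟩
  have hKdist : ∀ a ∈ Set.Icc (0:ℝ) π, ∀ b ∈ Set.Icc (0:ℝ) π,
      |deriv x a - deriv x b| ≤ (K:ℝ) * |a - b| ^ α := by
    intro a ha b hb
    have h := hK.edist_le ha hb
    rw [edist_dist, edist_dist] at h
    change _ ≤ _ * _ ^ α at h
    have hrhs : (K : ENNReal) * ENNReal.ofReal (dist a b) ^ α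
        = ENNReal.ofReal ((K:ℝ) * dist a b ^ α) := by
      rw [ENNReal.ofReal_mul K.coe_nonneg, ← ENNReal.ofReal_rpow_of_nonneg dist_nonneg hα0.le,
        ENNReal.ofReal_coe_nnreal]
    rw [hrhs] at h
    have h2 := (ENNReal.ofReal_le_ofReal_iff (by positivity)).mp h
    rwa [Real.dist_eq, Real.dist_eq] at h2
  have hB3 : BddAbove (Set.range fun p : Set.Icc (0:ℝ) π × Set.Icc (0:ℝ) π =>
      if (p.1 : ℝ) = (p.2 : ℝ) then 0
      else |deriv x p.1 - deriv x p.2| / |(p.1 : ℝ) - (p.2 : ℝ)| ^ α) := by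
    refine ⟨(K:ℝ), ?_⟩
    rintro _ ⟨p, rfl⟩
    beta_reduce
    by_cases hpp : (p.1 : ℝ) = (p.2 : ℝ)
    · simpa [hpp] using K.coe_nonneg
    · rw [if_neg hpp]
      have hd : (0:ℝ) < |(p.1 : ℝ) - (p.2 : ℝ)| ^ α :=
        Real.rpow_pos_of_pos (abs_pos.mpr (sub_ne_zero.mpr hpp)) α
      rw [div_le_iff₀ hd]
      exact hKdist p.1 p.1.2 p.2 p.2.2
  have hS1b : ∀ s ∈ Set.Icc (0:ℝ) π, |x s| ≤ S1 := fun s hs => le_ciSup hB1 ⟨s, hs⟩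
  have hS2b : ∀ s ∈ Set.Icc (0:ℝ) π, |deriv x s| ≤ S2 := fun s hs => le_ciSup hB2 ⟨s, hs⟩
  have hS10 : 0 ≤ S1 := le_trans (abs_nonneg _) (hS1b 0 ⟨le_refl 0, pi_pos.le⟩)
  have hS20 : 0 ≤ S2 := le_trans (abs_nonneg _) (hS2b 0 ⟨le_refl 0, pi_pos.le⟩)
  have hS30 : 0 ≤ S3 := by
    have := le_ciSup hB3 ⟨⟨0, le_refl 0, pi_pos.le⟩, ⟨0, le_refl 0, pi_pos.le⟩⟩
    simpa using this
  have hHolderX : ∀ a ∈ Set.Icc (0:ℝ) π, ∀ b ∈ Set.Icc (0:ℝ) π,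
      |deriv x a - deriv x b| ≤ S3 * |a - b| ^ α := by
    intro a ha b hb
    by_cases hab : a = b
    · simp [hab, Real.zero_rpow hα0.ne']
    · have hr := le_ciSup hB3 (⟨⟨a, ha⟩, ⟨b, hb⟩⟩ : Set.Icc (0:ℝ) π × Set.Icc (0:ℝ) π)
      beta_reduce at hr
      rw [if_neg hab] at hr
      have hd : (0:ℝ) < |a - b| ^ α :=
        Real.rpow_pos_of_pos (abs_pos.mpr (sub_ne_zero.mpr hab)) α
      calc |deriv x a - deriv x b| = (|deriv x a - deriv x b| / |a - b| ^ α) * |a - b| ^ α := by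
            field_simp
        _ ≤ S3 * |a - b| ^ α := mul_le_mul_of_nonneg_right hr hd.le
  -- the even periodic extension of deriv x
  set e : ℝ → ℝ := fun v => deriv x (fold v) with hedef
  have hec : Continuous e := hx'c.comp fold_cont
  have hee : ∀ s ∈ Set.Icc (0:ℝ) π, e s = deriv x s := fun s hs => by
    rw [hedef]; simp only; rw [fold_eq_self hs.1 hs.2]
  have hev : ∀ v : ℝ, e (-v) = e v := fun v => by
    rw [hedef]; simp only [fold_even]
  have hep : Function.Periodic e (2 * π) := fun v => by
    rw [hedef]; simp only [fold_periodic v]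
  have heH : ∀ a b : ℝ, |e a - e b| ≤ S3 * |a - b| ^ α := by
    intro a b
    refine le_trans (hHolderX (fold a) ⟨fold_nonneg a, fold_le_pi a⟩
      (fold b) ⟨fold_nonneg b, fold_le_pi b⟩) ?_
    refine mul_le_mul_of_nonneg_left ?_ hS30
    exact Real.rpow_le_rpow (abs_nonneg _) (fold_lip a b) hα0.le
  -- sup |g| bound
  have hgt : ∀ t : ℝ, |g t| ≤ S1 * π := by
    intro t
    rw [hg]
    simp only
    rw [proj_eq_integral hx n t]
    refine bound_sup hn hxc hS1b t (fun t s => (Fej n (t - s) - Fej n (t + s)) / 4)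
      ((((Fej_cont n).comp (continuous_const.sub continuous_id)).sub
        ((Fej_cont n).comp (continuous_const.add continuous_id))).div_const 4) fun s => ?_
    have h1 := Fej_nonneg hn (t - s)
    have h2 := Fej_nonneg hn (t + s)
    rw [abs_div, abs_of_nonneg (by norm_num : (0:ℝ) ≤ 4), div_le_div_iff_of_pos_right (by norm_num)]
    rw [abs_le]
    constructor <;> linarith
  -- deriv g formula and bound
  have hderiv : ∀ t : ℝ, deriv g t
      = ∫ s in (0:ℝ)..π, deriv x s * ((Fej n (t - s) + Fej n (t + s) - 2) / 4) := by
    intro t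
    rw [hg]
    exact proj_deriv_eq_integral hx hx0 hxpi n t
  have hdgt : ∀ t : ℝ, |deriv g t| ≤ S2 * π := by
    intro t
    rw [hderiv t]
    refine bound_sup hn hx'c hS2b t (fun t s => (Fej n (t - s) + Fej n (t + s) - 2) / 4)
      (((((Fej_cont n).comp (continuous_const.sub continuous_id)).add
        ((Fej_cont n).comp (continuous_const.add continuous_id))).sub continuous_const).div_const 4)
      fun s => ?_
    have h1 := Fej_nonneg hn (t - s)
    have h2 := Fej_nonneg hn (t + s)
    rw [abs_div, abs_of_nonneg (by norm_num : (0:ℝ) ≤ 4), div_le_div_iff_of_pos_right (by norm_num)]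
    rw [abs_le]
    constructor <;> linarith
  -- representation for the Hölder seminorm
  have hR : ∀ t : ℝ, deriv g t
      = (1/4) * (∫ u in (-π)..π, e (t - u) * Fej n u)
        - (1/2) * (∫ s in (0:ℝ)..π, deriv x s) := by
    intro t
    rw [hderiv t]
    have c1 : Continuous fun s : ℝ => Fej n (t - s) :=
      (Fej_cont n).comp (continuous_const.sub continuous_id)
    have c2 : Continuous fun s : ℝ => Fej n (t + s) :=
      (Fej_cont n).comp (continuous_const.add continuous_id)
    have key : ∀ s : ℝ, deriv x s * ((Fej n (t - s) + Fej n (t + s) - 2) / 4)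
        = (1/4) * (deriv x s * (Fej n (t - s) + Fej n (t + s))) - (1/2) * deriv x s :=
      fun s => by ring
    rw [intervalIntegral.integral_congr (fun s _ => key s),
      intervalIntegral.integral_sub
        (Continuous.intervalIntegrable (u := fun s =>
          (1/4 : ℝ) * (deriv x s * (Fej n (t - s) + Fej n (t + s))))
          (continuous_const.mul (hx'c.mul (c1.add c2))) _ _)
        (Continuous.intervalIntegrable (u := fun s => (1/2 : ℝ) * deriv x s)
          (continuous_const.mul hx'c) _ _),
      intervalIntegral.integral_const_mul, intervalIntegral.integral_const_mul,
      repr_ext hx'c hec hee hev hep n t]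
  have hdiff : ∀ t τ : ℝ, |deriv g t - deriv g τ| ≤ (π / 2) * (S3 * |t - τ| ^ α) := by
    intro t τ
    rw [hR t, hR τ]
    rw [show (1/4) * (∫ u in (-π)..π, e (t - u) * Fej n u)
          - (1/2) * (∫ s in (0:ℝ)..π, deriv x s)
          - ((1/4) * (∫ u in (-π)..π, e (τ - u) * Fej n u)
            - (1/2) * (∫ s in (0:ℝ)..π, deriv x s))
        = (1/4) * ((∫ u in (-π)..π, e (t - u) * Fej n u)
            - ∫ u in (-π)..π, e (τ - u) * Fej n u) by ring]
    rw [abs_mul, abs_of_nonneg (by norm_num : (0:ℝ) ≤ 1/4)]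
    have hb := holder_diff (e := e) hn hec t τ (D := S3 * |t - τ| ^ α) fun u => by
      have := heH (t - u) (τ - u)
      rwa [show t - u - (τ - u) = t - τ by ring] at this
    calc (1/4) * |(∫ u in (-π)..π, e (t - u) * Fej n u) - ∫ u in (-π)..π, e (τ - u) * Fej n u|
        ≤ (1/4) * (S3 * |t - τ| ^ α * (2 * π)) := by linarith
      _ = (π / 2) * (S3 * |t - τ| ^ α) := by ring
  -- assemble
  have hT1 : (⨆ t : Set.Icc (0:ℝ) π, |g t|) ≤ S1 * π := ciSup_le fun t => hgt t
  have hT2 : (⨆ t : Set.Icc (0:ℝ) π, |deriv g t|) ≤ S2 * π := ciSup_le fun t => hdgt t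
  have hT3 : (⨆ p : Set.Icc (0:ℝ) π × Set.Icc (0:ℝ) π,
      if (p.1 : ℝ) = (p.2 : ℝ) then 0
      else |deriv g p.1 - deriv g p.2| / |(p.1 : ℝ) - (p.2 : ℝ)| ^ α) ≤ (π / 2) * S3 := by
    refine ciSup_le fun p => ?_
    beta_reduce
    by_cases hpp : (p.1 : ℝ) = (p.2 : ℝ)
    · rw [if_pos hpp]
      positivity
    · rw [if_neg hpp]
      have hd : (0:ℝ) < |(p.1 : ℝ) - (p.2 : ℝ)| ^ α :=
        Real.rpow_pos_of_pos (abs_pos.mpr (sub_ne_zero.mpr hpp)) α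
      rw [div_le_iff₀ hd]
      calc |deriv g p.1 - deriv g p.2| ≤ (π / 2) * (S3 * |(p.1 : ℝ) - (p.2 : ℝ)| ^ α) :=
            hdiff p.1 p.2
        _ = (π / 2) * S3 * |(p.1 : ℝ) - (p.2 : ℝ)| ^ α := by ring
  have hπ : (0:ℝ) < π := pi_pos
  have p1 : 0 ≤ π * S1 := mul_nonneg hπ.le hS10
  have p2 : 0 ≤ π * S2 := mul_nonneg hπ.le hS20
  have p3 : 0 ≤ π * S3 := mul_nonneg hπ.le hS30
  calc (⨆ t : Set.Icc (0:ℝ) π, |g t|) + (⨆ t : Set.Icc (0:ℝ) π, |deriv g t|)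
        + (⨆ p : Set.Icc (0:ℝ) π × Set.Icc (0:ℝ) π,
          if (p.1 : ℝ) = (p.2 : ℝ) then 0
          else |deriv g p.1 - deriv g p.2| / |(p.1 : ℝ) - (p.2 : ℝ)| ^ α)
      ≤ S1 * π + S2 * π + (π / 2) * S3 := by linarith
    _ ≤ 2 * π * (S1 + S2 + S3) := by linarith
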